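/- arXiv:1707.01172 — 2 statements merged into one kernel-verified Lean document; each statement's English description precedes it below -/
import Mathlib

section
/- For weak compositions of length 2, A_{(0,1)} = M_{(0,1)} − M_{(1,0)}, i.e., x_2 = (x_1 + x_2) − x_1; hence the Demazure atom A_{(0,1)} = x_2 does not expand positively in the monomial slide basis. -/
open MvPolynomial
open scoped Classical

noncomputable section

/-- Partial sum of the first `k` entries of a weak composition. -/
def psum {n : ℕ} (a : Fin n → ℕ) (k : ℕ) : ℕ :=
  ∑ i ∈ Finset.univ.filter (fun i : Fin n => (i : ℕ) < k), a i

/-- Dominance order: `Dom a b` means `b ≥ a`, i.e. every partial sum of `b`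
is at least the corresponding partial sum of `a`. -/
def Dom {n : ℕ} (a b : Fin n → ℕ) : Prop := ∀ k : ℕ, psum a k ≤ psum b k

/-- `flat a`: the list of nonzero entries of `a`, in order. -/
def flat {n : ℕ} (a : Fin n → ℕ) : List ℕ := (List.ofFn a).filter (· ≠ 0)

/-- The monomial `x^b`. -/
def mono {n : ℕ} (b : Fin n → ℕ) : MvPolynomial (Fin n) ℤ := ∏ i, X i ^ b i

/-- Finite set of weak compositions of length `n` with all entries `≤ N`. -/
def box (n N : ℕ) : Finset (Fin n → ℕ) := Fintype.piFinset fun _ => Finset.range (N + 1)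

/-- A single slide move relative to the base composition `a`: a local move
`(…,0,k,…) → (…,i,j,…)` with `i + j = k`.  When `fixed = true` we additionally
require `j > 0` whenever `k` occupies a position that is nonzero in `a`. -/
def SlideMove {n : ℕ} (a : Fin n → ℕ) (fixed : Bool) (b c : Fin n → ℕ) : Prop :=
  ∃ (p : ℕ) (hp : p + 1 < n) (i j : ℕ),
    b ⟨p, Nat.lt_of_succ_lt hp⟩ = 0 ∧
    i + j = b ⟨p + 1, hp⟩ ∧
    (fixed = true → a ⟨p + 1, hp⟩ ≠ 0 → 0 < j) ∧
    c = Function.update (Function.update b ⟨p, Nat.lt_of_succ_lt hp⟩ i) ⟨p + 1, hp⟩ j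

/-- `b` is a slide of `a`. -/
def Slides {n : ℕ} (a b : Fin n → ℕ) : Prop :=
  Relation.ReflTransGen (SlideMove a false) a b

/-- `b` is a fixed slide of `a`. -/
def FixSlides {n : ℕ} (a b : Fin n → ℕ) : Prop :=
  Relation.ReflTransGen (SlideMove a true) a b

/-- The monomial slide polynomial `M_a`. -/
def Mslide {n : ℕ} (a : Fin n → ℕ) : MvPolynomial (Fin n) ℤ :=
  ∑ b ∈ (box n (∑ i, a i)).filter (fun b => Dom a b ∧ flat b = flat a), mono b

/-- The fundamental slide polynomial `F_a`, as the generating function of slides. -/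
def Fslide {n : ℕ} (a : Fin n → ℕ) : MvPolynomial (Fin n) ℤ :=
  ∑ b ∈ (box n (∑ i, a i)).filter (fun b => Slides a b), mono b

/-- The fundamental particle polynomial `L_a`, the generating function of fixed slides. -/
def Lpart {n : ℕ} (a : Fin n → ℕ) : MvPolynomial (Fin n) ℤ :=
  ∑ b ∈ (box n (∑ i, a i)).filter (fun b => FixSlides a b), mono b

/-- A left swap: exchange entries `b i ≤ b j` with `i < j`. -/
def LSwap {n : ℕ} (b c : Fin n → ℕ) : Prop :=
  ∃ i j : Fin n, i < j ∧ b i ≤ b j ∧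
    c = Function.update (Function.update b i (b j)) j (b i)


lemma psum2 (b : Fin 2 → ℕ) (k : ℕ) :
    psum b k = (if 0 < k then b 0 else 0) + (if 1 < k then b 1 else 0) := by
  simp [_root_.psum, Finset.sum_filter, Fin.sum_univ_two]

lemma dom2 (a b : Fin 2 → ℕ) : Dom a b ↔ a 0 ≤ b 0 ∧ a 0 + a 1 ≤ b 0 + b 1 := by
  constructor
  · intro h
    have h1 := h 1; have h2 := h 2
    rw [psum2, psum2] at h1 h2
    norm_num at h1 h2
    omega
  · intro h k
    rw [psum2, psum2]
    split_ifs <;> omega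

lemma flat2 (b : Fin 2 → ℕ) : flat b = [1] ↔ (b 0 = 0 ∧ b 1 = 1) ∨ (b 0 = 1 ∧ b 1 = 0) := by
  have hofn : List.ofFn b = [b 0, b 1] := by
    simp [List.ofFn_succ]
  rw [flat, hofn]
  by_cases h0 : b 0 = 0 <;> by_cases h1 : b 1 = 0 <;> simp [h0, h1]

lemma fun2_eq (b c : Fin 2 → ℕ) : b = c ↔ b 0 = c 0 ∧ b 1 = c 1 := by
  constructor
  · rintro rfl; exact ⟨rfl, rfl⟩
  · rintro ⟨h0, h1⟩; funext i; fin_cases i <;> assumption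

lemma mem_box2 (b : Fin 2 → ℕ) (N : ℕ) : b ∈ box 2 N ↔ b 0 ≤ N ∧ b 1 ≤ N := by
  simp [box, Fintype.mem_piFinset, Nat.lt_succ_iff, Fin.forall_fin_two]

lemma mono_eq {n : ℕ} (d : Fin n → ℕ) :
    mono d = monomial (Finsupp.equivFunOnFinite.symm d) 1 := by
  rw [monomial_eq, C_1, one_mul, Finsupp.prod_fintype]
  · rfl
  · intro i; exact pow_zero _

lemma coeff_mono {n : ℕ} (e d : Fin n → ℕ) :
    coeff (Finsupp.equivFunOnFinite.symm e) (mono d) = if d = e then 1 else 0 := by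
  rw [mono_eq, coeff_monomial]
  congr 1
  simp [Equiv.apply_eq_iff_eq]

lemma coeff_Mslide {n : ℕ} (a e : Fin n → ℕ) :
    coeff (Finsupp.equivFunOnFinite.symm e) (Mslide a) =
      if e ∈ (box n (∑ i, a i)).filter (fun b => Dom a b ∧ flat b = flat a) then 1 else 0 := by
  rw [Mslide, coeff_sum]
  simp_rw [coeff_mono]
  rw [Finset.sum_ite_eq' _ e (fun _ => (1:ℤ))]

lemma flat01 : flat (![0,1] : Fin 2 → ℕ) = [1] := by decide

lemma Q01 (b : Fin 2 → ℕ) :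
    (![0,1] : Fin 2 → ℕ) ∈ (box 2 (∑ i, b i)).filter (fun d => Dom b d ∧ flat d = flat b)
      ↔ b = ![0,1] := by
  rw [Finset.mem_filter, mem_box2, dom2, flat01, fun2_eq]
  rw [Fin.sum_univ_two]
  constructor
  · rintro ⟨_, hd, hf⟩
    rcases (flat2 b).mp hf.symm with h | h <;> simp_all
  · rintro ⟨h0, h1⟩
    simp_all
    exact ((flat2 b).mpr (Or.inl ⟨h0, h1⟩)).symm

lemma Q10 (b : Fin 2 → ℕ) :
    (![1,0] : Fin 2 → ℕ) ∈ (box 2 (∑ i, b i)).filter (fun d => Dom b d ∧ flat d = flat b)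
      ↔ b = ![0,1] ∨ b = ![1,0] := by
  rw [Finset.mem_filter, mem_box2, dom2, fun2_eq, fun2_eq]
  rw [Fin.sum_univ_two]
  have hf10 : flat (![1,0] : Fin 2 → ℕ) = [1] := by decide
  rw [hf10]
  constructor
  · rintro ⟨_, hd, hf⟩
    rcases (flat2 b).mp hf.symm with h | h
    · left; simp_all
    · right; simp_all
  · rintro (⟨h0, h1⟩ | ⟨h0, h1⟩) <;> simp_all
    · exact ((flat2 b).mpr (Or.inl ⟨h0, h1⟩)).symm
    · exact ((flat2 b).mpr (Or.inr ⟨h0, h1⟩)).symm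

lemma set01 : ((box 2 (∑ i, (![0,1] : Fin 2 → ℕ) i)).filter
    (fun d => Dom ![0,1] d ∧ flat d = flat ![0,1])) = {![0,1], ![1,0]} := by
  ext d
  rw [Finset.mem_filter, mem_box2, dom2, flat01, Finset.mem_insert, Finset.mem_singleton,
    fun2_eq, fun2_eq, flat2]
  simp [Fin.sum_univ_two]
  omega

lemma set10 : ((box 2 (∑ i, (![1,0] : Fin 2 → ℕ) i)).filter
    (fun d => Dom ![1,0] d ∧ flat d = flat ![1,0])) = {![1,0]} := by
  ext d
  have hf10 : flat (![1,0] : Fin 2 → ℕ) = [1] := by decide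
  rw [Finset.mem_filter, mem_box2, dom2, hf10, Finset.mem_singleton, fun2_eq, flat2]
  simp [Fin.sum_univ_two]
  omega

lemma mono01 : mono (![0,1] : Fin 2 → ℕ) = X 1 := by
  simp [mono, Fin.prod_univ_two]

lemma mono10 : mono (![1,0] : Fin 2 → ℕ) = X 0 := by
  simp [mono, Fin.prod_univ_two]

lemma ne0110 : (![0,1] : Fin 2 → ℕ) ≠ ![1,0] := by decide

lemma Mslide01 : Mslide (![0,1] : Fin 2 → ℕ) = X 0 + X 1 := by
  rw [Mslide, set01, Finset.sum_pair ne0110, mono01, mono10]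
  ring

lemma Mslide10 : Mslide (![1,0] : Fin 2 → ℕ) = X 0 := by
  rw [Mslide, set10, Finset.sum_singleton, mono10]


/-- the Demazure atom `A_{(0,1)} = x₂` satisfies
`A_{(0,1)} = M_{(0,1)} - M_{(1,0)}`, i.e. `x₂ = (x₁ + x₂) - x₁`; hence any
expansion of `A_{(0,1)}` in the monomial slide basis has a negative coefficient. -/
theorem atom01_not_monomial_slide_positive :
    (X 1 : MvPolynomial (Fin 2) ℤ) = Mslide ![0, 1] - Mslide ![1, 0] ∧
    Mslide ![0, 1] = X 0 + X 1 ∧ Mslide ![1, 0] = X 0 ∧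
    ∀ c : (Fin 2 → ℕ) →₀ ℤ,
      (X 1 : MvPolynomial (Fin 2) ℤ) = ∑ b ∈ c.support, c b • Mslide b → ∃ b, c b < 0 := by
  refine ⟨by rw [Mslide01, Mslide10]; ring, Mslide01, Mslide10, ?_⟩
  intro c h
  have key : ∀ e : Fin 2 → ℕ,
      coeff (Finsupp.equivFunOnFinite.symm e) (X 1 : MvPolynomial (Fin 2) ℤ)
        = ∑ b ∈ c.support, c b * coeff (Finsupp.equivFunOnFinite.symm e) (Mslide b) := by
    intro e
    rw [h, coeff_sum]
    simp only [coeff_smul, smul_eq_mul]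
  have h1 := key ![0,1]
  have h2 := key ![1,0]
  rw [← mono01, coeff_mono, if_pos rfl] at h1
  rw [show (X 1 : MvPolynomial (Fin 2) ℤ) = mono ![0,1] from mono01.symm,
    coeff_mono, if_neg ne0110] at h2
  simp_rw [coeff_Mslide] at h1 h2
  have r1 : ∀ b ∈ c.support, c b * (if (![0,1] : Fin 2 → ℕ) ∈
      (box 2 (∑ i, b i)).filter (fun d => Dom b d ∧ flat d = flat b) then (1:ℤ) else 0)
      = if b = ![0,1] then c b else 0 := by
    intro b _
    rw [if_congr (Q01 b) rfl rfl]
    split_ifs <;> simp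
  have r2 : ∀ b ∈ c.support, c b * (if (![1,0] : Fin 2 → ℕ) ∈
      (box 2 (∑ i, b i)).filter (fun d => Dom b d ∧ flat d = flat b) then (1:ℤ) else 0)
      = (if b = ![0,1] then c b else 0) + (if b = ![1,0] then c b else 0) := by
    intro b _
    rw [if_congr (Q10 b) rfl rfl]
    by_cases hA : b = ![0,1] <;> by_cases hB : b = ![1,0]
    · exact absurd (hA ▸ hB) ne0110
    · simp [hA, hB]
    · simp [hA, hB]
    · simp [hA, hB]
  rw [Finset.sum_congr rfl r1, Finset.sum_ite_eq' c.support _ (fun b => c b)] at h1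
  rw [Finset.sum_congr rfl r2, Finset.sum_add_distrib,
    Finset.sum_ite_eq' c.support _ (fun b => c b),
    Finset.sum_ite_eq' c.support _ (fun b => c b)] at h2
  refine ⟨![1,0], ?_⟩
  split_ifs at h1 h2 <;> omega

end
end

section
/- The fundamental slide polynomial expands as F_a = Σ L_b, where the sum is over weak compositions b ≥ a with flat(b) = flat(a), and L_b is the fundamental particle polynomial (the generating function of fixed slides of b). Moreover, each slide f of a is a fixed slide of exactly one such b. -/
open MvPolynomial
open scoped Classical

noncomputable section

section Aux

variable {n : ℕ}

/-- A slide move with no base condition (`SlideMove _ false`). -/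
def Smove {n : ℕ} (b c : Fin n → ℕ) : Prop :=
  ∃ (p : ℕ) (hp : p + 1 < n) (i j : ℕ),
    b ⟨p, Nat.lt_of_succ_lt hp⟩ = 0 ∧ i + j = b ⟨p + 1, hp⟩ ∧
    c = Function.update (Function.update b ⟨p, Nat.lt_of_succ_lt hp⟩ i) ⟨p + 1, hp⟩ j

lemma slideMove_false (a : Fin n → ℕ) : SlideMove a false = Smove := by
  funext b c; simp [SlideMove, Smove]

lemma slideMove_true_imp {a b c : Fin n → ℕ} (h : SlideMove a true b c) : Smove b c := by
  obtain ⟨p, hp, i, j, h1, h2, _, h4⟩ := h; exact ⟨p, hp, i, j, h1, h2, h4⟩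

lemma psum_zero (a : Fin n → ℕ) : psum a 0 = 0 := by
  simp [_root_.psum]

lemma psum_succ (a : Fin n → ℕ) {k : ℕ} (hk : k < n) :
    psum a (k + 1) = psum a k + a ⟨k, hk⟩ := by
  have h : Finset.univ.filter (fun i : Fin n => (i : ℕ) < k + 1)
      = insert (⟨k, hk⟩ : Fin n) (Finset.univ.filter (fun i : Fin n => (i : ℕ) < k)) := by
    ext i
    simp only [Finset.mem_filter, Finset.mem_univ, true_and, Finset.mem_insert, Fin.ext_iff]
    omega
  rw [_root_.psum, h, Finset.sum_insert (by simp)]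
  simp [_root_.psum, add_comm]

lemma psum_of_ge (a : Fin n → ℕ) {k : ℕ} (hk : n ≤ k) : psum a k = ∑ i, a i := by
  rw [_root_.psum]
  congr 1
  ext i
  simp only [Finset.mem_filter, Finset.mem_univ, true_and, iff_true]
  exact lt_of_lt_of_le i.isLt hk

lemma psum_mono (a : Fin n → ℕ) {k l : ℕ} (h : k ≤ l) : psum a k ≤ psum a l := by
  apply Finset.sum_le_sum_of_subset
  intro i hi
  simp only [Finset.mem_filter, Finset.mem_univ, true_and] at hi ⊢
  omega

lemma psum_le_total (a : Fin n → ℕ) (k : ℕ) : psum a k ≤ ∑ i, a i := by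
  rw [← psum_of_ge a (le_refl n)]
  rcases le_or_gt k n with h | h
  · exact psum_mono a h
  · rw [psum_of_ge a h.le, psum_of_ge a (le_refl n)]

/-- How a slide move changes partial sums. -/
lemma psum_double_update (f : Fin n → ℕ) {p : ℕ} (hp : p + 1 < n) (i j : ℕ)
    (h0 : f ⟨p, Nat.lt_of_succ_lt hp⟩ = 0) (hij : i + j = f ⟨p + 1, hp⟩) (m : ℕ) :
    psum (Function.update (Function.update f ⟨p, Nat.lt_of_succ_lt hp⟩ i) ⟨p + 1, hp⟩ j) m
      = psum f m + (if m = p + 1 then i else 0) := by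
  set P : Fin n := ⟨p, Nat.lt_of_succ_lt hp⟩ with hP
  set Q : Fin n := ⟨p + 1, hp⟩ with hQ
  have hPQ : P ≠ Q := by simp [hP, hQ, Fin.ext_iff]
  unfold _root_.psum
  set s := Finset.univ.filter (fun i : Fin n => (i : ℕ) < m) with hs
  have hmem : ∀ x : Fin n, x ∈ s ↔ (x : ℕ) < m := by
    intro x; simp [hs]
  rcases lt_trichotomy m (p + 1) with hm | hm | hm
  · rw [if_neg (by omega)]
    rw [add_zero]
    apply Finset.sum_congr rfl
    intro x hx
    have hx' : (x : ℕ) < m := (hmem x).1 hx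
    rw [Function.update_of_ne (by simp [hQ, Fin.ext_iff]; omega),
        Function.update_of_ne (by simp [hP, Fin.ext_iff]; omega)]
  · rw [if_pos hm]
    have hPs : P ∈ s := (hmem P).2 (by simp [hP]; omega)
    have h1 : ∀ x ∈ s, Function.update (Function.update f P i) Q j x
        = Function.update f P i x := by
      intro x hx
      have hx' : (x : ℕ) < m := (hmem x).1 hx
      rw [Function.update_of_ne (by simp [hQ, Fin.ext_iff]; omega)]
    rw [Finset.sum_congr rfl h1, Finset.sum_update_of_mem hPs]
    rw [Finset.sum_eq_sum_sdiff_singleton_add hPs f, h0]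
    omega
  · rw [if_neg (by omega)]
    have hPs : P ∈ s := (hmem P).2 (by simp [hP]; omega)
    have hQs : Q ∈ s := (hmem Q).2 (by simp [hQ]; omega)
    have hPs' : P ∈ s \ {Q} := by
      rw [Finset.mem_sdiff]; exact ⟨hPs, by simp [hPQ]⟩
    rw [Finset.sum_update_of_mem hQs, Finset.sum_update_of_mem hPs']
    rw [Finset.sum_eq_sum_sdiff_singleton_add hQs f,
        Finset.sum_eq_sum_sdiff_singleton_add hPs' f, h0]
    have : (s \ {Q}) \ {P} = (s \ {P}) \ {Q} := by
      ext x; simp [Finset.mem_sdiff]; tauto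
    omega

/-- Arithmetic characterization of fixed slides. -/
def FixChar {n : ℕ} (b f : Fin n → ℕ) : Prop :=
  (∑ i, f i = ∑ i, b i) ∧
    ∀ q : Fin n, b q ≠ 0 → f q ≠ 0 ∧ psum f ((q : ℕ) + 1) = psum b ((q : ℕ) + 1)

lemma fixChar_refl (b : Fin n → ℕ) : FixChar b b := ⟨rfl, fun _ hq => ⟨hq, rfl⟩⟩

lemma fixSlides_fixChar {b f : Fin n → ℕ} (h : FixSlides b f) : FixChar b f := by
  induction h with
  | refl => exact fixChar_refl b
  | tail _ hmove ih =>
    rename_i x y _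
    obtain ⟨p, hp, i, j, h1, h2, h3, h4⟩ := hmove
    set P : Fin n := ⟨p, Nat.lt_of_succ_lt hp⟩ with hPd
    set Q : Fin n := ⟨p + 1, hp⟩ with hQd
    have hPQ : P ≠ Q := by simp [hPd, hQd, Fin.ext_iff]
    have hps : ∀ m, psum y m = psum x m + (if m = p + 1 then i else 0) := by
      intro m; rw [h4]; exact psum_double_update x hp i j h1 h2 m
    constructor
    · have h5 := hps n
      rw [if_neg (by omega)] at h5
      rw [← psum_of_ge y (le_refl n), h5, add_zero, psum_of_ge x (le_refl n), ih.1]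
    · intro q hq
      obtain ⟨hx1, hx2⟩ := ih.2 q hq
      have hqP : q ≠ P := fun h => hx1 (h ▸ h1)
      have hy : ∀ r : Fin n, r ≠ P → r ≠ Q → y r = x r := by
        intro r h1' h2'
        rw [h4, Function.update_of_ne h2', Function.update_of_ne h1']
      have hqP' : (q : ℕ) ≠ p := fun hh => hqP (by rw [hPd]; exact Fin.ext hh)
      have hpsq : psum y ((q : ℕ) + 1) = psum x ((q : ℕ) + 1) := by
        rw [hps, if_neg (by omega), add_zero]
      by_cases hqQ : q = Q
      · have hj : 0 < j := h3 rfl (hqQ ▸ hq)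
        have hyq : y q = j := by rw [h4, hqQ, Function.update_self]
        exact ⟨by omega, by rw [hpsq, hx2]⟩
      · exact ⟨by rw [hy q hqP hqQ]; exact hx1, by rw [hpsq, hx2]⟩

/-- If `f` vanishes at every movable position where `b` vanishes, then `f = b`. -/
lemma fixChar_rigid {b f : Fin n → ℕ} (hc : FixChar b f)
    (H : ∀ q : Fin n, (q : ℕ) + 1 < n → b q = 0 → f q = 0) : f = b := by
  have key : ∀ k, k ≤ n → psum f k = psum b k := by
    intro k
    induction k with
    | zero => intro _; simp [_root_.psum_zero]
    | succ k ih =>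
      intro hk
      have hk' : k < n := hk
      by_cases hb : b ⟨k, hk'⟩ = 0
      · by_cases hkn : k + 1 < n
        · have hf := H ⟨k, hk'⟩ hkn hb
          rw [psum_succ f hk', psum_succ b hk', hf, hb, ih (le_of_lt hk')]
        · have hn : k + 1 = n := by omega
          rw [psum_of_ge f (le_of_eq hn.symm), psum_of_ge b (le_of_eq hn.symm), hc.1]
      · exact (hc.2 ⟨k, hk'⟩ hb).2
  funext q
  have h1 := key q (le_of_lt q.isLt)
  have h2 := key ((q : ℕ) + 1) q.isLt
  rw [psum_succ f q.isLt, psum_succ b q.isLt] at h2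
  simp only [Fin.eta] at h2
  omega

/-- Weight: sum of all partial sums; slide moves strictly decrease it. -/
def wt {n : ℕ} (g : Fin n → ℕ) : ℕ := ∑ m ∈ Finset.range (n + 1), psum g m

lemma fixChar_fixSlides {b : Fin n → ℕ} : ∀ f, FixChar b f → FixSlides b f := by
  have main : ∀ W : ℕ, ∀ f, wt f < W → FixChar b f → FixSlides b f := by
    intro W
    induction W with
    | zero => intro f h _; omega
    | succ W ihW =>
      intro f hWf hc
      by_cases hfb : f = b
      · exact hfb ▸ Relation.ReflTransGen.refl
      · have hex : ∃ q : Fin n, (q : ℕ) + 1 < n ∧ b q = 0 ∧ f q ≠ 0 := by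
          by_contra hno
          push_neg at hno
          exact hfb (fixChar_rigid hc (fun q h1 h2 => by
            by_contra h3; exact h3 (hno q h1 h2)))
        obtain ⟨q0, hp, hbP0, hfP0⟩ := hex
        set p : ℕ := (q0 : ℕ) with hpd
        set P : Fin n := ⟨p, Nat.lt_of_succ_lt hp⟩ with hPd
        set Q : Fin n := ⟨p + 1, hp⟩ with hQd
        have hbP : b P = 0 := hbP0
        have hfP : f P ≠ 0 := hfP0
        have hPQ : P ≠ Q := by simp [hPd, hQd, Fin.ext_iff]
        set f' := Function.update (Function.update f P 0) Q (f P + f Q) with hf'd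
        have hf'P : f' P = 0 := by
          rw [hf'd, Function.update_of_ne hPQ, Function.update_self]
        have hf'Q : f' Q = f P + f Q := by rw [hf'd, Function.update_self]
        have hf'r : ∀ r : Fin n, r ≠ P → r ≠ Q → f' r = f r := by
          intro r h1 h2
          rw [hf'd, Function.update_of_ne h2, Function.update_of_ne h1]
        have hrepr : f = Function.update (Function.update f' P (f P)) Q (f Q) := by
          funext x
          by_cases hxQ : x = Q
          · subst hxQ; rw [Function.update_self]
          · rw [Function.update_of_ne hxQ]
            by_cases hxP : x = P
            · subst hxP; rw [Function.update_self]
            · rw [Function.update_of_ne hxP, hf'r x hxP hxQ]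
        have hsum : f P + f Q = f' Q := hf'Q.symm
        have hmove : SlideMove b true f' f :=
          ⟨p, hp, f P, f Q, hf'P, hsum,
            fun _ hbQ => Nat.pos_of_ne_zero (hc.2 Q hbQ).1, hrepr⟩
        have hps : ∀ m, psum f m = psum f' m + (if m = p + 1 then f P else 0) := by
          intro m
          conv_lhs => rw [hrepr]
          exact psum_double_update f' hp (f P) (f Q) hf'P hsum m
        have hc' : FixChar b f' := by
          constructor
          · have h5 := hps n
            rw [if_neg (by omega), add_zero] at h5
            rw [← psum_of_ge f' (le_refl n), ← h5, psum_of_ge f (le_refl n), hc.1]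
          · intro q hq
            have hqP : q ≠ P := fun h => (h ▸ hq) hbP
            have hqP' : (q : ℕ) ≠ p := fun hh => hqP (by rw [hPd]; exact Fin.ext hh)
            have hpsq : psum f' ((q : ℕ) + 1) = psum f ((q : ℕ) + 1) := by
              rw [hps, if_neg (by omega), add_zero]
            refine ⟨?_, by rw [hpsq]; exact (hc.2 q hq).2⟩
            by_cases hqQ : q = Q
            · subst hqQ; rw [hf'Q]; have := hfP; omega
            · rw [hf'r q hqP hqQ]; exact (hc.2 q hq).1
        have hwt : wt f = wt f' + f P := by
          unfold wt
          rw [Finset.sum_congr rfl (fun m _ => hps m), Finset.sum_add_distrib]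
          congr 1
          rw [Finset.sum_ite_eq' (Finset.range (n + 1)) (p + 1) (fun _ => f P)]
          rw [if_pos (Finset.mem_range.2 (by omega))]
        have hfp : 0 < f P := Nat.pos_of_ne_zero hfP
        exact Relation.ReflTransGen.tail (ihW f' (by omega) hc') hmove
  exact fun f hc => main (wt f + 1) f (Nat.lt_succ_self _) hc

lemma filter_ne_sum (l : List ℕ) : (l.filter (· ≠ 0)).sum = l.sum := by
  induction l with
  | nil => rfl
  | cons a l ih =>
    rw [List.filter_cons]
    by_cases ha : a = 0
    · rw [if_neg (by simp [ha]), List.sum_cons, ih, ha, Nat.zero_add]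
    · rw [if_pos (by simp [ha]), List.sum_cons, List.sum_cons, ih]

lemma flat_sum (g : Fin n → ℕ) : (flat g).sum = ∑ i, g i := by
  rw [flat, filter_ne_sum, List.sum_ofFn]

lemma sum_eq_of_flat_eq {g h : Fin n → ℕ} (hf : flat g = flat h) : ∑ i, g i = ∑ i, h i := by
  rw [← flat_sum, ← flat_sum, hf]

lemma filter_drop (g : Fin n → ℕ) {t s : ℕ} (hts : t ≤ s) (hs : s ≤ n)
    (hzero : ∀ (k : ℕ) (hk : k < n), t ≤ k → k < s → g ⟨k, hk⟩ = 0) :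
    ((List.ofFn g).drop t).filter (· ≠ 0) = ((List.ofFn g).drop s).filter (· ≠ 0) := by
  have hL : (List.ofFn g).length = n := List.length_ofFn
  have h1 : (List.ofFn g).drop t = ((List.ofFn g).take s).drop t ++ (List.ofFn g).drop s := by
    conv_lhs => rw [← List.take_append_drop s (List.ofFn g)]
    rw [List.drop_append_of_le_length (by rw [List.length_take]; omega)]
  rw [h1, List.filter_append]
  have h2 : (((List.ofFn g).take s).drop t).filter (· ≠ 0) = [] := by
    rw [List.filter_eq_nil_iff]
    intro x hx
    obtain ⟨i, hi, hxe⟩ := List.mem_iff_getElem.1 hx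
    have hi' : t + i < s := by
      rw [List.length_drop, List.length_take] at hi
      omega
    rw [List.getElem_drop, List.getElem_take, List.getElem_ofFn] at hxe
    rw [← hxe]
    simp [hzero (t + i) (by omega) (by omega) hi']
  rw [h2, List.nil_append]

lemma flat_next {g h : Fin n → ℕ} (hf : flat g = flat h) {t s : ℕ} (hts : t ≤ s) (hs : s < n)
    (hagree : ∀ (k : ℕ) (hk : k < n), k < t → g ⟨k, hk⟩ = h ⟨k, hk⟩)
    (hzero : ∀ (k : ℕ) (hk : k < n), t ≤ k → k < s → g ⟨k, hk⟩ = 0)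
    (hgs : g ⟨s, hs⟩ ≠ 0) (hht : h ⟨t, lt_of_le_of_lt hts hs⟩ ≠ 0) :
    g ⟨s, hs⟩ = h ⟨t, lt_of_le_of_lt hts hs⟩ := by
  have hLg : (List.ofFn g).length = n := List.length_ofFn
  have hLh : (List.ofFn h).length = n := List.length_ofFn
  have htake : (List.ofFn g).take t = (List.ofFn h).take t := by
    apply List.ext_getElem (by rw [List.length_take, List.length_take, hLg, hLh])
    intro i h1 h2
    rw [List.getElem_take, List.getElem_take, List.getElem_ofFn, List.getElem_ofFn]
    have hi : i < t := by rw [List.length_take] at h1; omega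
    exact hagree i (by rw [List.length_take] at h1; omega) hi
  have hsplit : ∀ L : List ℕ, L.filter (· ≠ 0)
      = (L.take t).filter (· ≠ 0) ++ (L.drop t).filter (· ≠ 0) := by
    intro L; rw [← List.filter_append, List.take_append_drop]
  have hdrop : ((List.ofFn g).drop t).filter (· ≠ 0)
      = ((List.ofFn h).drop t).filter (· ≠ 0) := by
    apply List.append_cancel_left
      (as := ((List.ofFn g).take t).filter (· ≠ 0))
    rw [← hsplit]
    conv_rhs => rw [htake, ← hsplit]
    exact hf
  rw [filter_drop g hts (le_of_lt hs) hzero] at hdrop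
  have hg1 : (List.ofFn g).drop s = g ⟨s, hs⟩ :: (List.ofFn g).drop (s + 1) := by
    rw [List.drop_eq_getElem_cons (by omega), List.getElem_ofFn]
  have hh1 : (List.ofFn h).drop t = h ⟨t, lt_of_le_of_lt hts hs⟩ :: (List.ofFn h).drop (t + 1) := by
    rw [List.drop_eq_getElem_cons (by omega), List.getElem_ofFn]
  rw [hg1, hh1, List.filter_cons_of_pos (by simpa using hgs),
    List.filter_cons_of_pos (by simpa using hht)] at hdrop
  exact (List.cons_eq_cons.1 hdrop).1

lemma flat_swap (g : Fin n → ℕ) {p : ℕ} (hp : p + 1 < n)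
    (h0 : g ⟨p, Nat.lt_of_succ_lt hp⟩ = 0) :
    flat (Function.update (Function.update g ⟨p, Nat.lt_of_succ_lt hp⟩ (g ⟨p + 1, hp⟩))
      ⟨p + 1, hp⟩ 0) = flat g := by
  set P : Fin n := ⟨p, Nat.lt_of_succ_lt hp⟩ with hPd
  set Q : Fin n := ⟨p + 1, hp⟩ with hQd
  have hPQ : P ≠ Q := by rw [hPd, hQd, Ne, Fin.mk.injEq]; omega
  set g' := Function.update (Function.update g P (g Q)) Q 0 with hg'd
  have hg'P : g' P = g Q := by
    rw [hg'd, Function.update_of_ne hPQ, Function.update_self]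
  have hg'Q : g' Q = 0 := by rw [hg'd, Function.update_self]
  have hg'r : ∀ r : Fin n, r ≠ P → r ≠ Q → g' r = g r := by
    intro r h1 h2
    rw [hg'd, Function.update_of_ne h2, Function.update_of_ne h1]
  have hLg : (List.ofFn g).length = n := List.length_ofFn
  have hLg' : (List.ofFn g').length = n := List.length_ofFn
  have htake : (List.ofFn g').take p = (List.ofFn g).take p := by
    apply List.ext_getElem (by rw [List.length_take, List.length_take, hLg, hLg'])
    intro i h1 h2
    rw [List.getElem_take, List.getElem_take, List.getElem_ofFn, List.getElem_ofFn]
    have hi : i < p := by rw [List.length_take] at h1; omega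
    exact hg'r ⟨i, by omega⟩ (by rw [hPd, Ne, Fin.mk.injEq]; omega)
      (by rw [hQd, Ne, Fin.mk.injEq]; omega)
  have hdrop2 : (List.ofFn g').drop (p + 2) = (List.ofFn g).drop (p + 2) := by
    apply List.ext_getElem (by rw [List.length_drop, List.length_drop, hLg, hLg'])
    intro i h1 h2
    rw [List.getElem_drop, List.getElem_drop, List.getElem_ofFn, List.getElem_ofFn]
    exact hg'r ⟨p + 2 + i, by rw [List.length_drop, hLg'] at h1; omega⟩
      (by rw [hPd, Ne, Fin.mk.injEq]; omega) (by rw [hQd, Ne, Fin.mk.injEq]; omega)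
  have hdec : ∀ (u : Fin n → ℕ),
      List.ofFn u = (List.ofFn u).take p ++ u P :: u Q :: (List.ofFn u).drop (p + 2) := by
    intro u
    conv_lhs => rw [← List.take_append_drop p (List.ofFn u)]
    congr 1
    rw [List.drop_eq_getElem_cons (by rw [List.length_ofFn]; omega), List.getElem_ofFn]
    congr 1
    rw [List.drop_eq_getElem_cons (by rw [List.length_ofFn]; omega), List.getElem_ofFn]
  have e1 : List.ofFn g = (List.ofFn g).take p ++ (0 : ℕ) :: g Q :: (List.ofFn g).drop (p + 2) := by
    conv_lhs => rw [hdec g]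
    rw [h0]
  have e2 : List.ofFn g'
      = (List.ofFn g).take p ++ g Q :: (0 : ℕ) :: (List.ofFn g).drop (p + 2) := by
    conv_lhs => rw [hdec g']
    rw [hg'P, hg'Q, htake, hdrop2]
  rw [flat, flat]
  conv_lhs => rw [e2]
  conv_rhs => rw [e1]
  rw [List.filter_append, List.filter_append]
  have hsw : ∀ X : List ℕ, (g Q :: 0 :: X).filter (· ≠ 0) = ((0 : ℕ) :: g Q :: X).filter (· ≠ 0) := by
    intro X
    by_cases hq : g Q = 0
    · rw [hq]
    · rw [List.filter_cons, List.filter_cons, List.filter_cons, List.filter_cons,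
        if_pos (by simp [hq]), if_neg (by simp), if_neg (by simp), if_pos (by simp [hq])]
  rw [hsw]

lemma psum_agree {g h : Fin n → ℕ} {t : ℕ}
    (hagree : ∀ (k : ℕ) (hk : k < n), k < t → g ⟨k, hk⟩ = h ⟨k, hk⟩) :
    psum g t = psum h t := by
  apply Finset.sum_congr rfl
  intro i hi
  have : (i : ℕ) < t := by simpa using hi
  exact hagree i.1 i.isLt this

lemma psum_zero_on (g : Fin n → ℕ) : ∀ m t : ℕ, t ≤ m →
    (∀ (k : ℕ) (hk : k < n), t ≤ k → k < m → g ⟨k, hk⟩ = 0) → psum g m = psum g t := by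
  intro m
  induction m with
  | zero => intro t ht _; rw [Nat.le_zero.1 ht]
  | succ m ih =>
    intro t htm hz
    by_cases hteq : t = m + 1
    · rw [hteq]
    · have htm' : t ≤ m := by omega
      have h1 : psum g (m + 1) = psum g m := by
        by_cases hm : m < n
        · rw [psum_succ g hm, hz m hm htm' (by omega), Nat.add_zero]
        · rw [psum_of_ge g (by omega), psum_of_ge g (by omega)]
      rw [h1]
      exact ih t htm' (fun k hk h1 h2 => hz k hk h1 (by omega))

lemma smove_total {x y : Fin n → ℕ} (h : Smove x y) : ∑ i, y i = ∑ i, x i := by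
  obtain ⟨p, hp, i, j, h1, h2, h4⟩ := h
  have hps := psum_double_update x hp i j h1 h2 n
  rw [← h4, if_neg (by omega), Nat.add_zero] at hps
  rw [← psum_of_ge y (le_refl n), hps, psum_of_ge x (le_refl n)]

lemma rtg_smove_total {x y : Fin n → ℕ} (h : Relation.ReflTransGen Smove x y) :
    ∑ i, y i = ∑ i, x i := by
  induction h with
  | refl => rfl
  | tail _ hmove ih => rw [smove_total hmove, ih]

/-- Existence: along any slide path from `a`, one can maintain a composition `b`
dominating `a` with the same flat, of which the current position is a fixed slide. -/
lemma slides_exists_fixChar {a f : Fin n → ℕ} (h : Relation.ReflTransGen Smove a f) :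
    ∃ b, Dom a b ∧ flat b = flat a ∧ FixChar b f := by
  induction h with
  | refl => exact ⟨a, fun _ => le_refl _, rfl, fixChar_refl a⟩
  | tail _ hmove ih =>
    rename_i x y _
    obtain ⟨b, hdom, hflat, hc⟩ := ih
    obtain ⟨p, hp, i, j, h1, h2, h4⟩ := hmove
    set P : Fin n := ⟨p, Nat.lt_of_succ_lt hp⟩ with hPd
    set Q : Fin n := ⟨p + 1, hp⟩ with hQd
    have hPQ : P ≠ Q := by rw [hPd, hQd, Ne, Fin.mk.injEq]; omega
    have hps : ∀ m, psum y m = psum x m + (if m = p + 1 then i else 0) := by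
      intro m; rw [h4]; exact psum_double_update x hp i j h1 h2 m
    have hyP : y P = i := by rw [h4, Function.update_of_ne hPQ, Function.update_self]
    have hyQ : y Q = j := by rw [h4, Function.update_self]
    have hyr : ∀ r : Fin n, r ≠ P → r ≠ Q → y r = x r := by
      intro r hr1 hr2
      rw [h4, Function.update_of_ne hr2, Function.update_of_ne hr1]
    have htot : ∑ i', y i' = ∑ i', b i' := by
      rw [smove_total ⟨p, hp, i, j, h1, h2, h4⟩, hc.1]
    by_cases hcase : b Q = 0 ∨ 0 < j
    · refine ⟨b, hdom, hflat, htot, ?_⟩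
      intro q hq
      obtain ⟨hx1, hx2⟩ := hc.2 q hq
      have hqP : q ≠ P := fun h' => hx1 (h' ▸ h1)
      have hqP' : (q : ℕ) ≠ p := fun hh => hqP (by rw [hPd]; exact Fin.ext hh)
      have hpsq : psum y ((q : ℕ) + 1) = psum x ((q : ℕ) + 1) := by
        rw [hps, if_neg (by omega), Nat.add_zero]
      refine ⟨?_, by rw [hpsq, hx2]⟩
      by_cases hqQ : q = Q
      · have hj : 0 < j := hcase.resolve_left (hqQ ▸ hq)
        rw [hqQ, hyQ]; omega
      · rw [hyr q hqP hqQ]; exact hx1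
    · push_neg at hcase
      obtain ⟨hbQ, hj0⟩ := hcase
      have hj : j = 0 := Nat.le_zero.1 hj0
      have hixQ : i = x Q := by omega
      have hbP : b P = 0 := by
        by_contra hbP
        exact (hc.2 P hbP).1 h1
      set b' := Function.update (Function.update b P (b Q)) Q 0 with hb'd
      have hpsb : ∀ m, psum b' m = psum b m + (if m = p + 1 then b Q else 0) := by
        intro m
        rw [hb'd]
        exact psum_double_update b hp (b Q) 0 hbP (Nat.add_zero _) m
      have hb'P : b' P = b Q := by
        rw [hb'd, Function.update_of_ne hPQ, Function.update_self]
      have hb'Q : b' Q = 0 := by rw [hb'd, Function.update_self]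
      have hb'r : ∀ r : Fin n, r ≠ P → r ≠ Q → b' r = b r := by
        intro r hr1 hr2
        rw [hb'd, Function.update_of_ne hr2, Function.update_of_ne hr1]
      refine ⟨b', ?_, ?_, ?_, ?_⟩
      · intro k
        exact le_trans (hdom k) (by rw [hpsb k]; exact Nat.le_add_right _ _)
      · rw [hb'd, flat_swap b hp hbP, hflat]
      · rw [htot, ← psum_of_ge b (le_refl n), ← psum_of_ge b' (le_refl n), hpsb n,
          if_neg (by omega), Nat.add_zero]
      · intro q hq
        by_cases hqQ : q = Q
        · exact absurd (hqQ ▸ hq) (by rw [hb'Q]; simp)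
        · by_cases hqP : q = P
          · subst hqP
            have hxQ : x Q ≠ 0 := (hc.2 Q hbQ).1
            constructor
            · rw [hyP, hixQ]; exact hxQ
            · have e1 : psum x (p + 2) = psum b (p + 2) := (hc.2 Q hbQ).2
              have e2 : psum x (p + 2) = psum x (p + 1) + x Q := psum_succ x hp
              have e3 : psum b (p + 2) = psum b (p + 1) + b Q := psum_succ b hp
              have e4 : psum y (p + 1) = psum x (p + 1) + i := by
                rw [hps, if_pos rfl]
              have e5 : psum b' (p + 1) = psum b (p + 1) + b Q := by
                rw [hpsb, if_pos rfl]
              have hPv : ((P : Fin n) : ℕ) = p := rfl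
              rw [hPv, e4, e5, hixQ]
              omega
          · have hqP' : (q : ℕ) ≠ p := fun hh => hqP (by rw [hPd]; exact Fin.ext hh)
            have hbq : b q ≠ 0 := by rw [← hb'r q hqP hqQ]; exact hq
            obtain ⟨hx1, hx2⟩ := hc.2 q hbq
            constructor
            · rw [hyr q hqP hqQ]; exact hx1
            · rw [hps, hpsb, if_neg (by omega), if_neg (by omega), hx2]

/-- Uniqueness auxiliary: two FixChar-bases of the same `f` with equal flats
cannot first differ with `b` zero and `b'` nonzero. -/
lemma fixChar_unique_aux {b b' f : Fin n → ℕ} (hfl : flat b = flat b')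
    (hc : FixChar b f) (hc' : FixChar b' f) {t : ℕ} (ht : t < n)
    (hagree : ∀ (k : ℕ) (hk : k < n), k < t → b ⟨k, hk⟩ = b' ⟨k, hk⟩)
    (hbt : b ⟨t, ht⟩ = 0) (hbt' : b' ⟨t, ht⟩ ≠ 0) : False := by
  have hsum : ∑ i, b i = ∑ i, b' i := by rw [← hc.1, hc'.1]
  have hpt : psum b t = psum b' t := psum_agree hagree
  have hexs : ∃ s : ℕ, ∃ hs : s < n, t ≤ s ∧ b ⟨s, hs⟩ ≠ 0 := by
    by_contra hno
    push_neg at hno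
    have hz : ∀ (k : ℕ) (hk : k < n), t ≤ k → k < n → b ⟨k, hk⟩ = 0 := by
      intro k hk h1 _
      by_contra h3
      exact h3 (hno k hk h1)
    have h1 : psum b n = psum b t := psum_zero_on b n t (by omega) hz
    have h2 : psum b' (t + 1) = psum b' t + b' ⟨t, ht⟩ := psum_succ b' ht
    have h3 : psum b' (t + 1) ≤ ∑ i, b' i := psum_le_total b' _
    have h4 : psum b n = ∑ i, b i := psum_of_ge b (le_refl n)
    have h5 : b' ⟨t, ht⟩ ≠ 0 := hbt'
    omega
  classical
  obtain ⟨s, hsspec, hsmin⟩ : ∃ s, (∃ hs : s < n, t ≤ s ∧ b ⟨s, hs⟩ ≠ 0) ∧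
      ∀ m, m < s → ¬∃ hm : m < n, t ≤ m ∧ b ⟨m, hm⟩ ≠ 0 :=
    ⟨Nat.find hexs, Nat.find_spec hexs, fun m hm => Nat.find_min hexs hm⟩
  obtain ⟨hs, hts, hbs⟩ := hsspec
  have hzero : ∀ (k : ℕ) (hk : k < n), t ≤ k → k < s → b ⟨k, hk⟩ = 0 := by
    intro k hk h1 h2
    by_contra h3
    exact hsmin k h2 ⟨hk, h1, h3⟩
  have hval : b ⟨s, hs⟩ = b' ⟨t, lt_of_le_of_lt hts hs⟩ := by
    exact flat_next hfl hts hs hagree hzero hbs hbt'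
  have e1 : psum f (t + 1) = psum b' (t + 1) := (hc'.2 ⟨t, ht⟩ hbt').2
  have e2 : psum f (s + 1) = psum b (s + 1) := (hc.2 ⟨s, hs⟩ hbs).2
  have e3 : psum b' (t + 1) = psum b' t + b' ⟨t, ht⟩ := psum_succ b' ht
  have e4 : psum b (s + 1) = psum b s + b ⟨s, hs⟩ := psum_succ b hs
  have e5 : psum b s = psum b t := psum_zero_on b s t hts hzero
  have e6 : psum f (s + 1) = psum f s + f ⟨s, hs⟩ := psum_succ f hs
  have hst : s ≠ t := fun h => hbs (by subst h; exact hbt)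
  have e7 : psum f (t + 1) ≤ psum f s := psum_mono f (by omega)
  have e8 : f ⟨s, hs⟩ ≠ 0 := (hc.2 ⟨s, hs⟩ hbs).1
  have hv' : b' ⟨t, lt_of_le_of_lt hts hs⟩ = b' ⟨t, ht⟩ := rfl
  omega

lemma fixChar_unique {b b' f : Fin n → ℕ} (hfl : flat b = flat b')
    (hc : FixChar b f) (hc' : FixChar b' f) : b = b' := by
  by_contra hne
  have hex : ∃ t : ℕ, ∃ ht : t < n, b ⟨t, ht⟩ ≠ b' ⟨t, ht⟩ := by
    by_contra h
    push_neg at h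
    exact hne (funext fun q => h q.1 q.isLt)
  classical
  let t := Nat.find hex
  obtain ⟨ht, hbt⟩ : ∃ ht : t < n, b ⟨t, ht⟩ ≠ b' ⟨t, ht⟩ := Nat.find_spec hex
  have hagree : ∀ (k : ℕ) (hk : k < n), k < t → b ⟨k, hk⟩ = b' ⟨k, hk⟩ := by
    intro k hk h1
    by_contra h3
    exact Nat.find_min hex h1 ⟨hk, h3⟩
  by_cases h1 : b ⟨t, ht⟩ = 0
  · by_cases h2 : b' ⟨t, ht⟩ = 0
    · exact hbt (by rw [h1, h2])
    · exact fixChar_unique_aux hfl hc hc' ht hagree h1 h2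
  · by_cases h2 : b' ⟨t, ht⟩ = 0
    · exact fixChar_unique_aux hfl.symm hc' hc ht
        (fun k hk hkt => (hagree k hk hkt).symm) h2 h1
    · exact hbt (flat_next hfl (le_refl t) ht hagree (fun k hk hk1 hk2 => by omega) h1 h2)

lemma wt_double (f : Fin n → ℕ) {p : ℕ} (hp : p + 1 < n) (i j : ℕ)
    (h0 : f ⟨p, Nat.lt_of_succ_lt hp⟩ = 0) (hij : i + j = f ⟨p + 1, hp⟩) :
    wt (Function.update (Function.update f ⟨p, Nat.lt_of_succ_lt hp⟩ i) ⟨p + 1, hp⟩ j)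
      = wt f + i := by
  unfold wt
  rw [Finset.sum_congr rfl (fun m _ => psum_double_update f hp i j h0 hij m),
    Finset.sum_add_distrib]
  congr 1
  rw [Finset.sum_ite_eq' (Finset.range (n + 1)) (p + 1) (fun _ => i)]
  rw [if_pos (Finset.mem_range.2 (by omega))]

lemma wt_mono_of_dom {a b : Fin n → ℕ} (h : Dom a b) : wt a ≤ wt b :=
  Finset.sum_le_sum fun m _ => h m

lemma dom_wt_eq {a b : Fin n → ℕ} (h : Dom a b) (hw : wt b ≤ wt a) : a = b := by
  have hall : ∀ m ∈ Finset.range (n + 1), psum a m = psum b m := by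
    intro m hm
    by_contra hne
    have hlt : psum a m < psum b m := lt_of_le_of_ne (h m) hne
    have := Finset.sum_lt_sum (fun i (_ : i ∈ Finset.range (n + 1)) => h i) ⟨m, hm, hlt⟩
    have hba : wt a < wt b := this
    omega
  funext q
  have h1 := hall q.1 (Finset.mem_range.2 (by omega))
  have h2 := hall (q.1 + 1) (Finset.mem_range.2 (by omega))
  rw [psum_succ a q.isLt, psum_succ b q.isLt] at h2
  simp only [Fin.eta] at h2
  omega

lemma dom_flat_rtg {a b : Fin n → ℕ} (hdom : Dom a b) (hflat : flat a = flat b) :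
    Relation.ReflTransGen Smove a b := by
  classical
  have main : ∀ D : ℕ, ∀ a : Fin n → ℕ, wt b - wt a ≤ D → Dom a b → flat a = flat b →
      Relation.ReflTransGen Smove a b := by
    intro D
    induction D with
    | zero =>
      intro a hD hdom hflat
      have : a = b := dom_wt_eq hdom (by have := wt_mono_of_dom hdom; omega)
      rw [this]
    | succ D ih =>
      intro a hD hdom hflat
      by_cases hab : a = b
      · rw [hab]
      · have hex : ∃ t : ℕ, ∃ ht : t < n, a ⟨t, ht⟩ ≠ b ⟨t, ht⟩ := by
          by_contra h
          push_neg at h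
          exact hab (funext fun q => h q.1 q.isLt)
        obtain ⟨t, htspec, htmin⟩ : ∃ t, (∃ ht : t < n, a ⟨t, ht⟩ ≠ b ⟨t, ht⟩) ∧
            ∀ m, m < t → ¬∃ hm : m < n, a ⟨m, hm⟩ ≠ b ⟨m, hm⟩ :=
          ⟨Nat.find hex, Nat.find_spec hex, fun m hm => Nat.find_min hex hm⟩
        obtain ⟨ht, hne⟩ := htspec
        have hagree : ∀ (k : ℕ) (hk : k < n), k < t → a ⟨k, hk⟩ = b ⟨k, hk⟩ := by
          intro k hk h1
          by_contra h3
          exact htmin k h1 ⟨hk, h3⟩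
        have hpt : psum a t = psum b t := psum_agree hagree
        have hbt : b ⟨t, ht⟩ ≠ 0 := by
          intro hbz
          have h1 : psum a (t + 1) ≤ psum b (t + 1) := hdom (t + 1)
          rw [psum_succ a ht, psum_succ b ht, hbz] at h1
          have : a ⟨t, ht⟩ = 0 := by omega
          -- then both nonzero or equal: contradiction via flat_next with equal values
          exact hne (by rw [this, hbz])
        have hat : a ⟨t, ht⟩ = 0 := by
          by_contra haz
          exact hne (flat_next hflat (le_refl t) ht hagree
            (fun k hk hk1 hk2 => by omega) haz hbt)
        have hsumab : ∑ i, a i = ∑ i, b i := sum_eq_of_flat_eq hflat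
        have hexs : ∃ s : ℕ, ∃ hs : s < n, t ≤ s ∧ a ⟨s, hs⟩ ≠ 0 := by
          by_contra hno
          push_neg at hno
          have hz : ∀ (k : ℕ) (hk : k < n), t ≤ k → k < n → a ⟨k, hk⟩ = 0 := by
            intro k hk h1 _
            by_contra h3
            exact h3 (hno k hk h1)
          have h1 : psum a n = psum a t := psum_zero_on a n t (by omega) hz
          have h2 : psum b (t + 1) = psum b t + b ⟨t, ht⟩ := psum_succ b ht
          have h3 : psum b (t + 1) ≤ ∑ i, b i := psum_le_total b _
          have h4 : psum a n = ∑ i, a i := psum_of_ge a (le_refl n)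
          have h5 : b ⟨t, ht⟩ ≠ 0 := hbt
          omega
        obtain ⟨s, hsspec, hsmin⟩ : ∃ s, (∃ hs : s < n, t ≤ s ∧ a ⟨s, hs⟩ ≠ 0) ∧
            ∀ m, m < s → ¬∃ hm : m < n, t ≤ m ∧ a ⟨m, hm⟩ ≠ 0 :=
          ⟨Nat.find hexs, Nat.find_spec hexs, fun m hm => Nat.find_min hexs hm⟩
        obtain ⟨hs, hts, has⟩ := hsspec
        have hzero : ∀ (k : ℕ) (hk : k < n), t ≤ k → k < s → a ⟨k, hk⟩ = 0 := by
          intro k hk h1 h2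
          by_contra h3
          exact hsmin k h2 ⟨hk, h1, h3⟩
        have hst : s ≠ t := fun h => has (by subst h; exact hat)
        have htlts : t < s := by omega
        obtain ⟨p, rfl⟩ : ∃ p, s = p + 1 := ⟨s - 1, by omega⟩
        set P : Fin n := ⟨p, Nat.lt_of_succ_lt hs⟩ with hPd
        set Q : Fin n := ⟨p + 1, hs⟩ with hQd
        have haP : a P = 0 := hzero p (Nat.lt_of_succ_lt hs) (by omega) (by omega)
        have hval : a Q = b ⟨t, ht⟩ := flat_next hflat hts hs hagree hzero has hbt
        set a' := Function.update (Function.update a P (a Q)) Q 0 with ha'd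
        have hmove : Smove a a' := ⟨p, hs, a Q, 0, haP, Nat.add_zero _, rfl⟩
        have hpsa : ∀ m, psum a' m = psum a m + (if m = p + 1 then a Q else 0) := by
          intro m
          rw [ha'd]
          exact psum_double_update a hs (a Q) 0 haP (Nat.add_zero _) m
        have hflat' : flat a' = flat b := by rw [ha'd, flat_swap a hs haP, hflat]
        have hdom' : Dom a' b := by
          intro k
          rw [hpsa k]
          by_cases hk : k = p + 1
          · subst hk
            rw [if_pos rfl]
            have h1 : psum a (p + 1) = psum a t := psum_zero_on a (p + 1) t (by omega) hzero
            have h2 : psum b (t + 1) ≤ psum b (p + 1) := psum_mono b (by omega)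
            have h3 : psum b (t + 1) = psum b t + b ⟨t, ht⟩ := psum_succ b ht
            omega
          · rw [if_neg hk, Nat.add_zero]
            exact hdom k
        have hwt : wt a' = wt a + a Q := by
          rw [ha'd]
          exact wt_double a hs (a Q) 0 haP (Nat.add_zero _)
        have hlt : wt b - wt a' < wt b - wt a := by
          have h1 := wt_mono_of_dom hdom'
          have h2 : a Q ≠ 0 := has
          omega
        exact Relation.ReflTransGen.head hmove (ih a' (by omega) hdom' hflat')
  exact main (wt b - wt a) a (le_refl _) hdom hflat

lemma mem_box_self (g : Fin n → ℕ) : g ∈ box n (∑ i, g i) := by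
  rw [box, Fintype.mem_piFinset]
  intro i
  rw [Finset.mem_range, Nat.lt_succ_iff]
  exact Finset.single_le_sum (f := g) (fun _ _ => Nat.zero_le _) (Finset.mem_univ i)

end Aux

/-- `F_a = Σ_{b ≥ a, flat(b) = flat(a)} L_b`, and moreover every
slide `f` of `a` is a fixed slide of exactly one such `b`. -/
theorem Fslide_eq_sum_Lpart {n : ℕ} (a : Fin n → ℕ) :
    (Fslide a =
      ∑ b ∈ (box n (∑ i, a i)).filter (fun b => Dom a b ∧ flat b = flat a), Lpart b) ∧
    (∀ f : Fin n → ℕ, Slides a f →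
      ∃! b : Fin n → ℕ, Dom a b ∧ flat b = flat a ∧ FixSlides b f) := by
  classical
  have hSlides_iff : ∀ f : Fin n → ℕ, Slides a f ↔ Relation.ReflTransGen Smove a f := by
    intro f
    rw [Slides, slideMove_false]
  constructor
  · -- the polynomial identity
    set B := (box n (∑ i, a i)).filter (fun b => Dom a b ∧ flat b = flat a) with hBd
    have hR : ∀ b ∈ B, Lpart b
        = ∑ f ∈ box n (∑ i, a i), if FixSlides b f then mono f else 0 := by
      intro b hb
      have hsum : (∑ i, b i) = (∑ i, a i) :=
        sum_eq_of_flat_eq (Finset.mem_filter.1 hb).2.2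
      rw [Lpart, Finset.sum_filter, hsum]
    have hRHS : (∑ b ∈ B, Lpart b)
        = ∑ f ∈ box n (∑ i, a i), ∑ b ∈ B, if FixSlides b f then mono f else 0 := by
      rw [Finset.sum_congr rfl hR, Finset.sum_comm]
    rw [Fslide, Finset.sum_filter, hRHS]
    apply Finset.sum_congr rfl
    intro f _
    by_cases hs : Slides a f
    · rw [if_pos hs]
      obtain ⟨b₀, hdom, hflat, hchar⟩ := slides_exists_fixChar ((hSlides_iff f).1 hs)
      have hb₀mem : b₀ ∈ B := by
        rw [hBd, Finset.mem_filter]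
        refine ⟨?_, hdom, hflat⟩
        have := mem_box_self b₀
        rwa [sum_eq_of_flat_eq hflat] at this
      rw [Finset.sum_eq_single_of_mem b₀ hb₀mem ?_]
      · rw [if_pos (fixChar_fixSlides f hchar)]
      · intro b hb hne
        rw [if_neg]
        intro hFix
        exact hne (fixChar_unique ((Finset.mem_filter.1 hb).2.2.trans hflat.symm)
          (fixSlides_fixChar hFix) hchar)
    · rw [if_neg hs]
      refine (Finset.sum_eq_zero ?_).symm
      intro b hb
      rw [if_neg]
      intro hFix
      apply hs
      obtain ⟨_, hdomb, hflatb⟩ := Finset.mem_filter.1 hb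
      have h1 : Relation.ReflTransGen Smove a b := dom_flat_rtg hdomb hflatb.symm
      have h2 : Relation.ReflTransGen Smove b f :=
        Relation.ReflTransGen.mono (fun _ _ h => slideMove_true_imp h) _ _ hFix
      exact (hSlides_iff f).2 (h1.trans h2)
  · -- uniqueness of the base
    intro f hs
    obtain ⟨b₀, hdom, hflat, hchar⟩ := slides_exists_fixChar ((hSlides_iff f).1 hs)
    refine ⟨b₀, ⟨hdom, hflat, fixChar_fixSlides f hchar⟩, ?_⟩
    rintro b ⟨_, hflat', hfix'⟩
    exact fixChar_unique (hflat'.trans hflat.symm) (fixSlides_fixChar hfix') hchar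

end
end
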